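/- For a type-β 3-spiral representative P (i.e. for all i ≥ N: (Pᵢ,Pᵢ₊₁,Pᵢ₊₂) and (Pᵢ,Pᵢ₊₁,Pᵢ₊₃) positively oriented and Pᵢ₊₄ ∈ int(Pᵢ,Pᵢ₊₁,Pᵢ₊₃)), for all i > N the quadrilateral (Pᵢ, Pᵢ₊₁, Pᵢ₊₂, Pᵢ₊₃) is convex, meaning all four triples (Pᵢ,Pᵢ₊₁,Pᵢ₊₂), (Pᵢ₊₁,Pᵢ₊₂,Pᵢ₊₃), (Pᵢ₊₂,Pᵢ₊₃,Pᵢ), (Pᵢ₊₃,Pᵢ,Pᵢ₊₁) are positively oriented. -/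
import Mathlib


def det2 (u v : ℝ × ℝ) : ℝ := u.1 * v.2 - u.2 * v.1

def ori (A B C : ℝ × ℝ) : ℝ := det2 (B - A) (C - B)

def inTriangle (A B C W : ℝ × ℝ) : Prop :=
  ∃ l₁ l₂ l₃ : ℝ, l₁ ∈ Set.Ioo (0:ℝ) 1 ∧ l₂ ∈ Set.Ioo (0:ℝ) 1 ∧
    l₃ ∈ Set.Ioo (0:ℝ) 1 ∧ l₁ + l₂ + l₃ = 1 ∧ W = l₁ • A + l₂ • B + l₃ • C

lemma ori_cyc (A B C : ℝ × ℝ) : ori A B C = ori C A B := by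
  simp [ori, det2]; ring

lemma ori_comb (E A C : ℝ × ℝ) (l₁ l₂ l₃ : ℝ) (hsum : l₁ + l₂ + l₃ = 1) :
    ori C (l₁ • E + l₂ • A + l₃ • C) A = l₁ * ori E A C := by
  have h2 : l₂ = 1 - l₁ - l₃ := by linarith
  subst h2
  simp [ori, det2, Prod.ext_iff]
  ring

theorem stmt12 (P : ℤ → ℝ × ℝ) (N : ℤ)
    (hspiral : ∀ i ≥ N, 0 < ori (P i) (P (i+1)) (P (i+2)) ∧
      0 < ori (P i) (P (i+1)) (P (i+3)) ∧
      inTriangle (P i) (P (i+1)) (P (i+3)) (P (i+4))) :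
    ∀ i > N, 0 < ori (P i) (P (i+1)) (P (i+2)) ∧
      0 < ori (P (i+1)) (P (i+2)) (P (i+3)) ∧
      0 < ori (P (i+2)) (P (i+3)) (P i) ∧
      0 < ori (P (i+3)) (P i) (P (i+1)) := by
  intro i hi
  obtain ⟨h1, h2, _⟩ := hspiral i (by linarith)
  obtain ⟨h3, _, _⟩ := hspiral (i+1) (by linarith)
  obtain ⟨_, h4, h5⟩ := hspiral (i-1) (by linarith)
  have e1 : i - 1 + 1 = i := by ring
  have e3 : i - 1 + 3 = i + 2 := by ring
  have e4 : i - 1 + 4 = i + 3 := by ring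
  rw [e1, e3] at h4
  rw [e1, e3, e4] at h5
  have e2 : i + 1 + 1 = i + 2 := by ring
  have e2' : i + 1 + 2 = i + 3 := by ring
  rw [e2, e2'] at h3
  refine ⟨h1, h3, ?_, ?_⟩
  · obtain ⟨l₁, l₂, l₃, hl₁, hl₂, hl₃, hsum, hW⟩ := h5
    rw [hW, ori_comb _ _ _ _ _ _ hsum]
    exact mul_pos hl₁.1 h4
  · rw [ori_cyc, ori_cyc]; exact h2
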